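/- Let f : 2^S → ℝ≥0 be submodular, and let S_1,...,S_K ⊆ S. Let U and T = {t_1 < t_2 < ⋯ < t_{|T|}} be nonempty subsets of [K], and let q ∈ [|U|], r_q ∈ [|T|] be integers such that S^{(q)}(U) ⊆ S^{(r_q)}(T). Then ∑_{r=1}^{|T|} f(S_{t_r}) + r_q · f(S^{(q)}(U)) ≥ ∑_{r=1}^{r_q} ( f(S^{(r)}(T)) + f(S_{t_r} ∩ S^{(q)}(U)) ) + ∑_{r=r_q+1}^{|T|} f( S_{t_r} ∩ ( S^{(q)}(U) ∪ S^{(r_q+1)}({t_1,...,t_r}) ) ). -/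

import Mathlib

open Finset

/-- `cutOp S U r` is `S^{(r)}(U) = ⋃_{U' ⊆ U, |U'| = r} ⋂_{k ∈ U'} S_k`. -/
def cutOp {α : Type*} [Fintype α] [DecidableEq α] (S : ℕ → Finset α) (U : Finset ℕ)
    (r : ℕ) : Finset α :=
  (U.powersetCard r).sup fun V => V.inf S

section Aux

variable {α : Type*} [Fintype α] [DecidableEq α]

lemma mem_cutOp {S : ℕ → Finset α} {U : Finset ℕ} {r : ℕ} {x : α} :
    x ∈ cutOp S U r ↔ ∃ W, W ⊆ U ∧ W.card = r ∧ x ∈ W.inf S := by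
  simp [cutOp, Finset.mem_sup, Finset.mem_powersetCard]
  tauto

lemma cutOp_anti {S : ℕ → Finset α} {U : Finset ℕ} {r s : ℕ} (h : r ≤ s) :
    cutOp S U s ⊆ cutOp S U r := by
  intro x hx
  rw [mem_cutOp] at hx ⊢
  obtain ⟨W, hWU, hWc, hxW⟩ := hx
  obtain ⟨W', hW'W, hW'c⟩ := Finset.exists_subset_card_eq (show r ≤ W.card by omega)
  exact ⟨W', hW'W.trans hWU, hW'c, (Finset.inf_mono hW'W : W.inf S ⊆ W'.inf S) hxW⟩

lemma cutOp_zero (S : ℕ → Finset α) (U : Finset ℕ) : cutOp S U 0 = Finset.univ := by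
  simp [cutOp, Finset.powersetCard_zero, Finset.top_eq_univ]

lemma cutOp_of_card_lt {S : ℕ → Finset α} {U : Finset ℕ} {r : ℕ} (h : U.card < r) :
    cutOp S U r = ∅ := by
  rw [cutOp, Finset.powersetCard_eq_empty.2 h, Finset.sup_empty, Finset.bot_eq_empty]

lemma cutOp_insert (S : ℕ → Finset α) (V : Finset ℕ) (a : ℕ) (ha : a ∉ V) (r : ℕ) :
    cutOp S (insert a V) (r + 1) = cutOp S V (r + 1) ∪ (S a ∩ cutOp S V r) := by
  ext x
  simp only [Finset.mem_union, Finset.mem_inter, mem_cutOp]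
  constructor
  · rintro ⟨W, hWV, hWc, hxW⟩
    by_cases haW : a ∈ W
    · right
      refine ⟨(Finset.inf_le haW : W.inf S ⊆ S a) hxW, W.erase a, ?_, ?_, ?_⟩
      · intro y hy
        have hy' := Finset.mem_erase.1 hy
        exact (Finset.mem_insert.1 (hWV hy'.2)).resolve_left hy'.1
      · rw [Finset.card_erase_of_mem haW, hWc]; omega
      · exact (Finset.inf_mono (Finset.erase_subset _ _) : W.inf S ⊆ _) hxW
    · left
      refine ⟨W, fun y hy => (Finset.mem_insert.1 (hWV hy)).resolve_left ?_, hWc, hxW⟩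
      rintro rfl; exact haW hy
  · rintro (⟨W, hWV, hWc, hxW⟩ | ⟨hxa, W, hWV, hWc, hxW⟩)
    · exact ⟨W, hWV.trans (Finset.subset_insert _ _), hWc, hxW⟩
    · refine ⟨insert a W, Finset.insert_subset_insert _ hWV, ?_, ?_⟩
      · rw [Finset.card_insert_of_notMem (fun h => ha (hWV h)), hWc]
      · rw [Finset.inf_insert]
        exact Finset.mem_inter.2 ⟨hxa, hxW⟩

/-- Telescoping submodularity chain. -/
lemma chain_ineq (f : Finset α → ℝ)
    (hf : ∀ A B : Finset α, f A + f B ≥ f (A ∪ B) + f (A ∩ B))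
    (X : Finset α) (H H' : ℕ → Finset α)
    (hmono : ∀ r, H (r + 1) ⊆ H r) (h0 : H 0 = Finset.univ)
    (hH' : ∀ r, H' (r + 1) = H (r + 1) ∪ (X ∩ H r)) (n : ℕ) :
    ∑ r ∈ Icc 1 n, f (H r) + f X ≥ ∑ r ∈ Icc 1 n, f (H' r) + f (X ∩ H n) := by
  induction n with
  | zero => simp [h0]
  | succ n ih =>
    rw [Finset.sum_Icc_succ_top (by omega) (fun r => f (H r)),
        Finset.sum_Icc_succ_top (by omega) (fun r => f (H' r))]
    have key := hf (H (n + 1)) (X ∩ H n)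
    have h1 : H (n + 1) ∪ (X ∩ H n) = H' (n + 1) := (hH' n).symm
    have h2 : H (n + 1) ∩ (X ∩ H n) = X ∩ H (n + 1) := by
      ext x
      simp only [Finset.mem_inter]
      exact ⟨fun h => ⟨h.2.1, h.1⟩, fun h => ⟨h.2, h.1, hmono n h.2⟩⟩
    rw [h1, h2] at key
    linarith

end Aux

set_option maxHeartbeats 1000000 in
theorem lemma2_submodular {α : Type*} [Fintype α] [DecidableEq α] (K : ℕ)
    (f : Finset α → ℝ) (hf0 : ∀ A, 0 ≤ f A)
    (hf : ∀ A B : Finset α, f A + f B ≥ f (A ∪ B) + f (A ∩ B))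
    (S : ℕ → Finset α) (U T : Finset ℕ)
    (hU : U ⊆ Finset.Icc 1 K) (hT : T ⊆ Finset.Icc 1 K)
    (hUne : U.Nonempty) (hTne : T.Nonempty)
    (t : ℕ → ℕ) (ht : StrictMonoOn t (Set.Icc 1 T.card))
    (himg : (Finset.Icc 1 T.card).image t = T)
    (q rq : ℕ) (hq1 : 1 ≤ q) (hq2 : q ≤ U.card) (hrq1 : 1 ≤ rq) (hrq2 : rq ≤ T.card)
    (hsub : cutOp S U q ⊆ cutOp S T rq) :
    ∑ r ∈ Finset.Icc 1 T.card, f (S (t r)) + (rq : ℝ) * f (cutOp S U q)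
    ≥ ∑ r ∈ Finset.Icc 1 rq, (f (cutOp S T r) + f (S (t r) ∩ cutOp S U q))
      + ∑ r ∈ Finset.Icc (rq + 1) T.card,
          f (S (t r) ∩ (cutOp S U q ∪ cutOp S ((Finset.Icc 1 r).image t) (rq + 1))) := by
  set N := T.card with hN
  set A := cutOp S U q with hA
  set P : ℕ → Finset ℕ := fun m => (Finset.Icc 1 m).image t with hP
  set g : ℕ → ℕ → Finset α := fun m r => cutOp S (P m) r ∪ A with hg
  have hPcard : ∀ m, m ≤ N → (P m).card = m := by
    intro m hm
    rw [hP]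
    rw [Finset.card_image_of_injOn]
    · simp [Nat.card_Icc]
    · apply Set.InjOn.mono _ (ht.injOn)
      intro x hx
      simp only [Finset.coe_Icc, Set.mem_Icc] at hx ⊢
      omega
  have hPsucc : ∀ m, m + 1 ≤ N → P (m + 1) = insert (t (m + 1)) (P m) := by
    intro m hm
    show (Finset.Icc 1 (m + 1)).image t = insert (t (m + 1)) ((Finset.Icc 1 m).image t)
    have : Finset.Icc 1 (m + 1) = insert (m + 1) (Finset.Icc 1 m) := by
      ext x; simp only [Finset.mem_Icc, Finset.mem_insert]; omega
    rw [this, Finset.image_insert]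
  have hPnotmem : ∀ m, m + 1 ≤ N → t (m + 1) ∉ P m := by
    intro m hm hmem
    rw [hP] at hmem
    obtain ⟨r, hr, hrt⟩ := Finset.mem_image.1 hmem
    rw [Finset.mem_Icc] at hr
    have h1 : t r < t (m + 1) := ht ⟨hr.1, by omega⟩ ⟨by omega, hm⟩ (by omega)
    omega
  have hg0 : ∀ m, g m 0 = Finset.univ := by
    intro m; simp [hg, cutOp_zero]
  have hgmono : ∀ m r, g m (r + 1) ⊆ g m r := fun m r =>
    Finset.union_subset_union (cutOp_anti (Nat.le_succ r)) subset_rfl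
  have hgrec : ∀ m, m + 1 ≤ N → ∀ r,
      g (m + 1) (r + 1) = g m (r + 1) ∪ (S (t (m + 1)) ∩ g m r) := by
    intro m hm r
    simp only [hg]
    rw [hPsucc m hm, cutOp_insert S (P m) _ (hPnotmem m hm) r]
    ext x
    simp only [Finset.mem_union, Finset.mem_inter]
    tauto
  have hgA : ∀ m, m ≤ N → g m (m + 1) = A := by
    intro m hm
    simp only [hg]
    rw [cutOp_of_card_lt (by rw [hPcard m hm]; omega), Finset.empty_union]
  -- Phase 1
  have phase1 : ∀ m, m ≤ rq →
      ∑ r ∈ Finset.Icc 1 m, f (S (t r)) + (m : ℝ) * f A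
      ≥ ∑ r ∈ Finset.Icc 1 m, (f (g m r) + f (S (t r) ∩ A)) := by
    intro m
    induction m with
    | zero => intro _; simp
    | succ m ih =>
      intro h
      have hm : m ≤ rq := by omega
      have hmN : m + 1 ≤ N := le_trans h hrq2
      have ih' := ih hm
      have hc := chain_ineq f hf (S (t (m + 1))) (g m) (g (m + 1)) (hgmono m) (hg0 m)
        (hgrec m hmN) (m + 1)
      rw [Finset.sum_Icc_succ_top (by omega) (fun r => f (g m r)), hgA m (by omega)] at hc
      rw [Finset.sum_Icc_succ_top (by omega) (fun r => f (S (t r))),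
          Finset.sum_Icc_succ_top (by omega) (fun r => f (g (m + 1) r) + f (S (t r) ∩ A))]
      rw [Finset.sum_add_distrib] at ih' ⊢
      rw [Finset.sum_Icc_succ_top (by omega) (fun r => f (g (m + 1) r))] at hc
      push_cast
      linarith
  -- Phase 2
  have phase2 : ∀ m, rq ≤ m → m ≤ N →
      ∑ r ∈ Finset.Icc 1 m, f (S (t r)) + (rq : ℝ) * f A
      ≥ ∑ r ∈ Finset.Icc 1 rq, (f (g m r) + f (S (t r) ∩ A))
        + ∑ r ∈ Finset.Icc (rq + 1) m, f (S (t r) ∩ g r (rq + 1)) := by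
    intro m
    induction m with
    | zero => intro h1 _; omega
    | succ m ih =>
      intro h1 h2
      by_cases hcase : rq = m + 1
      · subst hcase
        have hemp : Finset.Icc (m + 1 + 1) (m + 1) = ∅ := Finset.Icc_eq_empty (by omega)
        rw [hemp, Finset.sum_empty, add_zero]
        exact phase1 (m + 1) le_rfl
      · have h1' : rq ≤ m := by omega
        have ih' := ih h1' (by omega)
        have hc := chain_ineq f hf (S (t (m + 1))) (g m) (g (m + 1)) (hgmono m) (hg0 m)
          (hgrec m h2) rq
        have hX : S (t (m + 1)) ∩ g m rq = S (t (m + 1)) ∩ g (m + 1) (rq + 1) := by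
          rw [hgrec m h2 rq]
          have hs := hgmono m rq
          ext x
          simp only [Finset.mem_inter, Finset.mem_union]
          constructor
          · rintro ⟨hx1, hx2⟩; exact ⟨hx1, Or.inr ⟨hx1, hx2⟩⟩
          · rintro ⟨hx1, hx2 | hx2⟩
            · exact ⟨hx1, hs hx2⟩
            · exact ⟨hx1, hx2.2⟩
        rw [hX] at hc
        rw [Finset.sum_Icc_succ_top (by omega) (fun r => f (S (t r))),
            Finset.sum_Icc_succ_top (show rq + 1 ≤ m + 1 by omega)
              (fun r => f (S (t r) ∩ g r (rq + 1)))]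
        rw [Finset.sum_add_distrib] at ih' ⊢
        linarith
  -- Conclusion
  have final := phase2 N hrq2 le_rfl
  have hPN : P N = T := himg
  have hgT : ∀ r ∈ Finset.Icc 1 rq, f (g N r) + f (S (t r) ∩ A)
      = f (cutOp S T r) + f (S (t r) ∩ cutOp S U q) := by
    intro r hr
    rw [Finset.mem_Icc] at hr
    have : g N r = cutOp S T r := by
      simp only [hg, hPN]
      rw [Finset.union_eq_left]
      exact hsub.trans (cutOp_anti hr.2)
    rw [this, hA]
  have hg2 : ∀ r ∈ Finset.Icc (rq + 1) N,
      f (S (t r) ∩ g r (rq + 1))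
      = f (S (t r) ∩ (cutOp S U q ∪ cutOp S ((Finset.Icc 1 r).image t) (rq + 1))) := by
    intro r _
    simp only [hg, hP, hA]
    rw [Finset.union_comm]
  rw [Finset.sum_congr rfl hgT, Finset.sum_congr rfl hg2] at final
  exact final
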